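/- Let G be a uniformly perfect group, i.e. there exists an integer k such that every element of G is a product of at most k commutators. Let Γ be a group, T a central element of Γ of infinite order, and π : Γ → G a surjective group homomorphism whose kernel is exactly the cyclic subgroup generated by T. Suppose Φ₁, Φ₂ : Γ → ℝ both satisfy: (1) Φ(γT) = Φ(γ) + 1 for all γ ∈ Γ; (2) the map (γ₁, γ₂) ↦ Φ(γ₁γ₂) − Φ(γ₁) − Φ(γ₂) is bounded on Γ × Γ; (3) Φ(γⁿ) = nΦ(γ) for all γ ∈ Γ and n ∈ ℤ. Then Φ₁ = Φ₂. -/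

import Mathlib

private lemma qm_zero_of_nat_mul_le {d M : ℝ} (h : ∀ n : ℕ, (n : ℝ) * |d| ≤ M) : d = 0 := by
  by_contra hd
  have habs : 0 < |d| := abs_pos.2 hd
  obtain ⟨n, hn⟩ := exists_nat_gt (M / |d|)
  have h2 : M < n * |d| := (div_lt_iff₀ habs).mp hn
  linarith [h n]

section
variable {Γ : Type*} [Group Γ] (Φ : Γ → ℝ) (C : ℝ)

private lemma qm_one (h3 : ∀ (γ : Γ) (m : ℤ), Φ (γ ^ m) = m * Φ γ) : Φ 1 = 0 := by
  have := h3 1 0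
  simpa using this

private lemma qm_inv (h3 : ∀ (γ : Γ) (m : ℤ), Φ (γ ^ m) = m * Φ γ) (x : Γ) :
    Φ x⁻¹ = - Φ x := by
  have := h3 x (-1)
  simpa using this

private lemma qm_conj
    (h2 : ∀ γ₁ γ₂ : Γ, |Φ (γ₁ * γ₂) - Φ γ₁ - Φ γ₂| ≤ C)
    (h3 : ∀ (γ : Γ) (m : ℤ), Φ (γ ^ m) = m * Φ γ)
    (g x : Γ) : Φ (g * x * g⁻¹) = Φ x := by
  have key : ∀ n : ℕ, (n : ℝ) * |Φ (g * x * g⁻¹) - Φ x| ≤ 2 * C := by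
    intro n
    have e1 : (g * x * g⁻¹) ^ (n : ℤ) = g * x ^ (n : ℤ) * g⁻¹ := conj_zpow
    have h3a := h3 (g * x * g⁻¹) n
    have h3b := h3 x n
    rw [e1] at h3a
    push_cast at h3a h3b
    have hA := h2 g (x ^ (n : ℤ) * g⁻¹)
    have hB := h2 (x ^ (n : ℤ)) g⁻¹
    have hinv := qm_inv Φ h3 g
    have e2 : g * x ^ (n : ℤ) * g⁻¹ = g * (x ^ (n : ℤ) * g⁻¹) := by group
    rw [e2] at h3a
    have habs : |(n : ℝ) * Φ (g * x * g⁻¹) - (n : ℝ) * Φ x| ≤ 2 * C := by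
      rw [← h3a, ← h3b]
      calc |Φ (g * (x ^ (n : ℤ) * g⁻¹)) - Φ (x ^ (n : ℤ))|
          = |(Φ (g * (x ^ (n : ℤ) * g⁻¹)) - Φ g - Φ (x ^ (n : ℤ) * g⁻¹))
            + (Φ (x ^ (n : ℤ) * g⁻¹) - Φ (x ^ (n : ℤ)) - Φ g⁻¹)| := by
            rw [hinv]; congr 1; ring
        _ ≤ |Φ (g * (x ^ (n : ℤ) * g⁻¹)) - Φ g - Φ (x ^ (n : ℤ) * g⁻¹)|
            + |Φ (x ^ (n : ℤ) * g⁻¹) - Φ (x ^ (n : ℤ)) - Φ g⁻¹| := abs_add_le _ _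
        _ ≤ 2 * C := by linarith
    calc (n : ℝ) * |Φ (g * x * g⁻¹) - Φ x|
        = |(n : ℝ) * Φ (g * x * g⁻¹) - (n : ℝ) * Φ x| := by
          rw [← mul_sub, abs_mul, Nat.abs_cast]
      _ ≤ 2 * C := habs
  have := qm_zero_of_nat_mul_le key
  linarith [this]

private lemma qm_comm
    (h2 : ∀ γ₁ γ₂ : Γ, |Φ (γ₁ * γ₂) - Φ γ₁ - Φ γ₂| ≤ C)
    (h3 : ∀ (γ : Γ) (m : ℤ), Φ (γ ^ m) = m * Φ γ)
    (a b : Γ) : |Φ (a * b * a⁻¹ * b⁻¹)| ≤ C := by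
  have h := h2 (a * b * a⁻¹) b⁻¹
  have hc := qm_conj Φ C h2 h3 a b
  have hi := qm_inv Φ h3 b
  have e : a * b * a⁻¹ * b⁻¹ = (a * b * a⁻¹) * b⁻¹ := by group
  rw [e]
  have : |Φ ((a * b * a⁻¹) * b⁻¹)|
      = |Φ ((a * b * a⁻¹) * b⁻¹) - Φ (a * b * a⁻¹) - Φ b⁻¹| := by
    rw [hc, hi]; congr 1; ring
  rw [this]
  exact h

private lemma qm_prod
    (h2 : ∀ γ₁ γ₂ : Γ, |Φ (γ₁ * γ₂) - Φ γ₁ - Φ γ₂| ≤ C)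
    (h3 : ∀ (γ : Γ) (m : ℤ), Φ (γ ^ m) = m * Φ γ)
    (hC : 0 ≤ C) :
    ∀ l : List (Γ × Γ),
      |Φ ((l.map fun p => p.1 * p.2 * p.1⁻¹ * p.2⁻¹).prod)| ≤ l.length * (2 * C) := by
  intro l
  induction l with
  | nil => simp [qm_one Φ h3]
  | cons hd tl ih =>
    simp only [List.map_cons, List.prod_cons, List.length_cons]
    have hcomm := qm_comm Φ C h2 h3 hd.1 hd.2
    have hsplit := h2 (hd.1 * hd.2 * hd.1⁻¹ * hd.2⁻¹)
      ((tl.map fun p => p.1 * p.2 * p.1⁻¹ * p.2⁻¹).prod)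
    rw [abs_le] at hsplit hcomm ih ⊢
    push_cast
    constructor <;> [skip; skip] <;>
      · obtain ⟨ha, hb⟩ := hsplit
        obtain ⟨hc1, hc2⟩ := hcomm
        obtain ⟨hi1, hi2⟩ := ih
        have := abs_nonneg (Φ ((tl.map fun p => p.1 * p.2 * p.1⁻¹ * p.2⁻¹).prod))
        nlinarith

end

/-- Uniqueness of the homogeneous quasi-morphism normalized on a central extension of a
uniformly perfect group: if `G` is uniformly perfect, `0 → ℤ → Γ → G → 1` is a central
extension with `T` the (infinite order, central) image of `1 ∈ ℤ`, and `Φ₁, Φ₂ : Γ → ℝ`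
both satisfy `Φ(γT) = Φ(γ) + 1`, boundedness of `Φ(γ₁γ₂) − Φ(γ₁) − Φ(γ₂)`, and
`Φ(γⁿ) = nΦ(γ)`, then `Φ₁ = Φ₂`. -/
theorem homogeneous_quasimorphism_unique {G Γ : Type*} [Group G] [Group Γ]
    (hG : ∃ k : ℕ, ∀ g : G, ∃ l : List (G × G), l.length ≤ k ∧
      g = (l.map fun p => p.1 * p.2 * p.1⁻¹ * p.2⁻¹).prod)
    (T : Γ) (hTc : ∀ γ : Γ, T * γ = γ * T) (hTo : ¬ IsOfFinOrder T)
    (π : Γ →* G) (hπ : Function.Surjective π) (hker : π.ker = Subgroup.zpowers T)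
    (Φ₁ Φ₂ : Γ → ℝ)
    (h1₁ : ∀ γ : Γ, Φ₁ (γ * T) = Φ₁ γ + 1)
    (h2₁ : ∃ C : ℝ, ∀ γ₁ γ₂ : Γ, |Φ₁ (γ₁ * γ₂) - Φ₁ γ₁ - Φ₁ γ₂| ≤ C)
    (h3₁ : ∀ (γ : Γ) (m : ℤ), Φ₁ (γ ^ m) = m * Φ₁ γ)
    (h1₂ : ∀ γ : Γ, Φ₂ (γ * T) = Φ₂ γ + 1)
    (h2₂ : ∃ C : ℝ, ∀ γ₁ γ₂ : Γ, |Φ₂ (γ₁ * γ₂) - Φ₂ γ₁ - Φ₂ γ₂| ≤ C)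
    (h3₂ : ∀ (γ : Γ) (m : ℤ), Φ₂ (γ ^ m) = m * Φ₂ γ) :
    Φ₁ = Φ₂ := by
  obtain ⟨k, hk⟩ := hG
  obtain ⟨C₁, hC₁⟩ := h2₁
  obtain ⟨C₂, hC₂⟩ := h2₂
  have hC₁0 : 0 ≤ C₁ := by
    have := hC₁ 1 1
    simpa [qm_one Φ₁ h3₁] using this
  have hC₂0 : 0 ≤ C₂ := by
    have := hC₂ 1 1
    simpa [qm_one Φ₂ h3₂] using this
  -- shift lemma
  have hshift : ∀ (Φ : Γ → ℝ), (∀ γ, Φ (γ * T) = Φ γ + 1) →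
      ∀ (n : ℤ) (γ : Γ), Φ (γ * T ^ n) = Φ γ + n := by
    intro Φ h1 n
    induction n using Int.induction_on with
    | zero => simp
    | succ m ih =>
      intro γ
      have e : γ * T ^ ((m : ℤ) + 1) = (γ * T ^ (m : ℤ)) * T := by
        rw [zpow_add, zpow_one, mul_assoc]
      rw [e, h1, ih γ]
      push_cast
      ring
    | pred m ih =>
      intro γ
      have e : (γ * T ^ (-(m : ℤ) - 1)) * T = γ * T ^ (-(m : ℤ)) := by
        rw [mul_assoc, ← zpow_add_one]
        norm_num
      have := h1 (γ * T ^ (-(m : ℤ) - 1))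
      rw [e, ih γ] at this
      push_cast at this ⊢
      linarith
  -- section of π
  set s : G → Γ := Function.surjInv hπ with hs_def
  have hs : ∀ g : G, π (s g) = g := fun g => Function.surjInv_eq hπ g
  -- the key bound
  have hbound : ∀ δ : Γ, |Φ₁ δ - Φ₂ δ| ≤ k * (2 * C₁) + k * (2 * C₂) := by
    intro δ
    obtain ⟨l, hl, heq⟩ := hk (π δ)
    set L : List (Γ × Γ) := l.map (fun p => (s p.1, s p.2)) with hL
    set c : Γ := (L.map fun p => p.1 * p.2 * p.1⁻¹ * p.2⁻¹).prod with hc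
    have hπc : π c = π δ := by
      rw [hc, map_list_prod, hL, List.map_map, List.map_map, heq]
      congr 1
      apply List.map_congr_left
      intro p _
      simp [Function.comp, map_mul, map_inv, hs]
    have hmem : δ * c⁻¹ ∈ π.ker := by
      rw [MonoidHom.mem_ker, map_mul, map_inv, hπc]
      simp
    rw [hker] at hmem
    obtain ⟨n, hn⟩ := Subgroup.mem_zpowers_iff.mp hmem
    have hTcomm : T ^ n * c = c * T ^ n := by
      have : Commute T c := hTc c
      exact (this.zpow_left n).eq
    have hδ : δ = c * T ^ n := by
      rw [← hTcomm, hn]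
      group
    have b1 := qm_prod Φ₁ C₁ hC₁ h3₁ hC₁0 L
    have b2 := qm_prod Φ₂ C₂ hC₂ h3₂ hC₂0 L
    have hLlen : (L.length : ℝ) ≤ (k : ℝ) := by
      rw [hL, List.length_map]
      exact_mod_cast hl
    have hb1 : |Φ₁ c| ≤ (k : ℝ) * (2 * C₁) := by
      refine b1.trans ?_
      have : (0:ℝ) ≤ 2 * C₁ := by linarith
      nlinarith
    have hb2 : |Φ₂ c| ≤ (k : ℝ) * (2 * C₂) := by
      refine b2.trans ?_
      have : (0:ℝ) ≤ 2 * C₂ := by linarith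
      nlinarith
    rw [hδ, hshift Φ₁ h1₁ n c, hshift Φ₂ h1₂ n c]
    have e : Φ₁ c + n - (Φ₂ c + n) = Φ₁ c - Φ₂ c := by ring
    rw [e]
    calc |Φ₁ c - Φ₂ c| ≤ |Φ₁ c| + |Φ₂ c| := abs_sub _ _
      _ ≤ k * (2 * C₁) + k * (2 * C₂) := by linarith
  funext γ
  have key : ∀ n : ℕ, (n : ℝ) * |Φ₁ γ - Φ₂ γ| ≤ k * (2 * C₁) + k * (2 * C₂) := by
    intro n
    have := hbound (γ ^ (n : ℤ))
    rw [h3₁ γ n, h3₂ γ n] at this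
    calc (n : ℝ) * |Φ₁ γ - Φ₂ γ| = |(n : ℝ) * Φ₁ γ - (n : ℝ) * Φ₂ γ| := by
          rw [← mul_sub, abs_mul, Nat.abs_cast]
      _ ≤ _ := by exact_mod_cast this
  have := qm_zero_of_nat_mul_le key
  linarith [this]
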